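/- Let V be a real inner product space and let ᾱ₁, α₂, ᾱ₃, ᾱ₄, β₁, β₂, β₃, β₄ ∈ V satisfy: ⟪ᾱ₄,ᾱ₄⟫ = ⟪β₂,β₂⟫ = ⟪β₃,β₃⟫ = ⟪β₄,β₄⟫ = 2; ⟪ᾱ₄,β₂⟫ = ⟪ᾱ₄,β₃⟫ = ⟪ᾱ₄,β₄⟫ = −1 and ⟪β₂,β₃⟫ = ⟪β₂,β₄⟫ = ⟪β₃,β₄⟫ = 0; ⟪ᾱ₁,β₂⟫ + ⟪ᾱ₁,β₄⟫ = 0 and ⟪ᾱ₁,β₃⟫ = ⟪ᾱ₁,ᾱ₄⟫ = 0; ⟪ᾱ₃,β₃⟫ + ⟪ᾱ₃,β₄⟫ = 0 and ⟪ᾱ₃,β₂⟫ = ⟪ᾱ₃,ᾱ₄⟫ = 0; ⟪β₁,β₂⟫ = ⟪β₁,β₃⟫ = ⟪β₁,β₄⟫ = ⟪β₁,ᾱ₄⟫ = 0 (the relevant Gram relations of the Carter diagram E₈(a₈)). Set β̄₄ := −(2ᾱ₄ + β₄ + β₂ + β₃). Then ⟪β̄₄,β̄₄⟫ = 2, ⟪β̄₄,ᾱ₄⟫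 = −1, and β̄₄ is orthogonal to each of ᾱ₁, ᾱ₃, β₁, β₂, β₃ (the Gram relations of the Carter diagram E₈(a₇)). -/
import Mathlib

open scoped RealInnerProductSpace


theorem stmt15 {V : Type*} [NormedAddCommGroup V] [InnerProductSpace ℝ V]
    (αb₁ α₂ αb₃ αb₄ β₁ β₂ β₃ β₄ : V)
    (h0 : ⟪αb₄, αb₄⟫ = 2)
    (h1 : ⟪β₂, β₂⟫ = 2)
    (h2 : ⟪β₃, β₃⟫ = 2)
    (h3 : ⟪β₄, β₄⟫ = 2)
    (h4 : ⟪αb₄, β₂⟫ = -1)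
    (h5 : ⟪αb₄, β₃⟫ = -1)
    (h6 : ⟪αb₄, β₄⟫ = -1)
    (h7 : ⟪β₂, β₃⟫ = 0)
    (h8 : ⟪β₂, β₄⟫ = 0)
    (h9 : ⟪β₃, β₄⟫ = 0)
    (h10 : ⟪αb₁, β₂⟫ + ⟪αb₁, β₄⟫ = 0)
    (h11 : ⟪αb₁, β₃⟫ = 0)
    (h12 : ⟪αb₁, αb₄⟫ = 0)
    (h13 : ⟪αb₃, β₃⟫ + ⟪αb₃, β₄⟫ = 0)
    (h14 : ⟪αb₃, β₂⟫ = 0)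
    (h15 : ⟪αb₃, αb₄⟫ = 0)
    (h16 : ⟪β₁, β₂⟫ = 0)
    (h17 : ⟪β₁, β₃⟫ = 0)
    (h18 : ⟪β₁, β₄⟫ = 0)
    (h19 : ⟪β₁, αb₄⟫ = 0)
    (βb₄ : V) (hdef : βb₄ = -((2:ℝ) • αb₄ + β₄ + β₂ + β₃)) :
    ⟪βb₄, βb₄⟫ = 2 ∧
    ⟪βb₄, αb₄⟫ = -1 ∧
    ⟪βb₄, αb₁⟫ = 0 ∧
    ⟪βb₄, αb₃⟫ = 0 ∧
    ⟪βb₄, β₁⟫ = 0 ∧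
    ⟪βb₄, β₂⟫ = 0 ∧
    ⟪βb₄, β₃⟫ = 0 := by
  have s : ∀ x y : V, ⟪x, y⟫ = ⟪y, x⟫ := fun x y => real_inner_comm y x
  subst hdef
  simp only [inner_neg_left, inner_neg_right, inner_add_left, inner_add_right,
    real_inner_smul_left, real_inner_smul_right, h0, h1, h2, h3, h4, h5, h6, h7, h8, h9,
    s β₄ αb₄, s β₂ αb₄, s β₃ αb₄, s β₃ β₂, s β₄ β₂, s β₄ β₃,
    s β₄ αb₁, s β₂ αb₁, s β₃ αb₁, s αb₄ αb₁,
    s β₄ αb₃, s β₂ αb₃, s β₃ αb₃, s αb₄ αb₃,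
    s β₄ β₁, s β₂ β₁, s β₃ β₁, s αb₄ β₁,
    h11, h12, h14, h15, h16, h17, h18, h19]
  refine ⟨by ring, by ring, by linarith, by linarith, by ring, by ring, by ring⟩
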